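/- Let ψ : (0,∞) → (0,∞) be differentiable and non-increasing, and suppose there exist constants b > 0 such that for all t > 0 and all r > 0, ψ'(t) ≤ (1/(2r))·(2/V(r)² − ψ(t)²), where V : (0,∞) → (0,∞) is a continuous non-decreasing function with lim_{r→∞} V(r) = ∞ and such that for each t > 0 there exists r(t) > 0 with 2/ψ(t) = V(r(t)). Then for every t > 0, ψ(4 V(r(t)) r(t)) ≤ 2/V(r(t)). -/

import Mathlib

open Set Filter

/-- Abstract Nash-type comparison: if `ψ` is positive, non-increasing and differentiable
on `(0,∞)` with `ψ'(t) ≤ (1/(2r))(2/V(r)² - ψ(t)²)` for all `t, r > 0`, where `V` is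
continuous, non-decreasing, tends to `∞`, and `r(t) > 0` satisfies `2/ψ(t) = V(r(t))`,
then `ψ(4 V(r(t)) r(t)) ≤ 2/V(r(t))` for every `t > 0`. -/
theorem nash_ode_comparison (ψ ψ' V r : ℝ → ℝ)
    (hψpos : ∀ t, 0 < t → 0 < ψ t)
    (hψmono : ∀ s t, 0 < s → s ≤ t → ψ t ≤ ψ s)
    (hψderiv : ∀ t, 0 < t → HasDerivAt ψ (ψ' t) t)
    (hVpos : ∀ s, 0 < s → 0 < V s)
    (hVcont : ContinuousOn V (Ioi 0))
    (hVmono : ∀ s t, 0 < s → s ≤ t → V s ≤ V t)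
    (hVtop : Tendsto V atTop atTop)
    (hineq : ∀ t s, 0 < t → 0 < s → ψ' t ≤ (1 / (2 * s)) * (2 / (V s) ^ 2 - (ψ t) ^ 2))
    (hr : ∀ t, 0 < t → 0 < r t ∧ 2 / ψ t = V (r t)) :
    ∀ t, 0 < t → ψ (4 * V (r t) * r t) ≤ 2 / V (r t) := by
  intro t ht
  obtain ⟨hR, hVR⟩ := hr t ht
  set R := r t with hRdef
  have hVRpos : 0 < V R := hVpos _ hR
  have hψtpos : 0 < ψ t := hψpos t ht
  have hψt : ψ t = 2 / V R := by
    rw [← hVR]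
    field_simp
  have ht2 : 0 < t / 2 := by linarith
  have hmem : ∀ u ∈ Icc (t / 2) t, 0 < u := fun u hu => lt_of_lt_of_le ht2 hu.1
  have hψu : ∀ u ∈ Icc (t / 2) t, 2 / V R ≤ ψ u := by
    intro u hu
    rw [← hψt]
    exact hψmono u t (hmem u hu) hu.2
  set g : ℝ → ℝ := fun u => 2 / ψ u - u / (2 * R) with hg
  have hderiv : ∀ u ∈ Icc (t / 2) t,
      HasDerivAt g (-2 * ψ' u / ψ u ^ 2 - 1 / (2 * R)) u := by
    intro u hu
    have hu0 : 0 < u := hmem u hu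
    have hψune : ψ u ≠ 0 := (hψpos u hu0).ne'
    have h1 : HasDerivAt (fun v => 2 / ψ v) (-2 * ψ' u / ψ u ^ 2) u := by
      have := (hasDerivAt_const u (2 : ℝ)).fun_div (hψderiv u hu0) hψune
      exact this.congr_deriv (by ring)
    have h2 : HasDerivAt (fun v : ℝ => v / (2 * R)) (1 / (2 * R)) u := by
      simpa using (hasDerivAt_id u).div_const (2 * R)
    exact h1.sub h2
  have hmono : MonotoneOn g (Icc (t / 2) t) := by
    apply monotoneOn_of_deriv_nonneg (convex_Icc _ _)
    · exact fun u hu => (hderiv u hu).continuousAt.continuousWithinAt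
    · intro u hu
      rw [interior_Icc] at hu
      exact ((hderiv u ⟨hu.1.le, hu.2.le⟩).differentiableAt).differentiableWithinAt
    · intro u hu
      rw [interior_Icc] at hu
      have hu' : u ∈ Icc (t / 2) t := ⟨hu.1.le, hu.2.le⟩
      rw [(hderiv u hu').deriv]
      have hu0 : 0 < u := hmem u hu'
      have hP : 2 / V R ≤ ψ u := hψu u hu'
      have hPpos : 0 < ψ u := hψpos u hu0
      have hPV : 2 ≤ ψ u * V R := by
        rw [div_le_iff₀ hVRpos] at hP
        linarith
      have hin := hineq u R hu0 hR
      have h2V : 2 / V R ^ 2 ≤ ψ u ^ 2 / 2 := by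
        rw [div_le_div_iff₀ (by positivity) (by norm_num)]
        nlinarith
      have hψ' : ψ' u ≤ -(ψ u ^ 2) / (4 * R) := by
        have : (1 / (2 * R)) * (2 / V R ^ 2 - ψ u ^ 2) ≤
            (1 / (2 * R)) * (ψ u ^ 2 / 2 - ψ u ^ 2) := by
          apply mul_le_mul_of_nonneg_left _ (by positivity)
          linarith
        calc ψ' u ≤ (1 / (2 * R)) * (2 / V R ^ 2 - ψ u ^ 2) := hin
          _ ≤ (1 / (2 * R)) * (ψ u ^ 2 / 2 - ψ u ^ 2) := this
          _ = -(ψ u ^ 2) / (4 * R) := by field_simp; ring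
      have hkey : 1 / (2 * R) ≤ -2 * ψ' u / ψ u ^ 2 := by
        rw [div_le_div_iff₀ (by positivity) (by positivity)]
        rw [le_div_iff₀ (by positivity)] at hψ'
        nlinarith
      linarith
  have hle := hmono (left_mem_Icc.mpr (by linarith)) (right_mem_Icc.mpr (by linarith))
    (by linarith)
  have hgt : g (t / 2) ≤ g t := hle
  have hpos2 : 0 < 2 / ψ (t / 2) := by
    have := hψpos (t / 2) ht2
    positivity
  simp only [hg] at hgt
  rw [hψt] at hgt
  have hVval : (2 : ℝ) / (2 / V R) = V R := by
    field_simp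
  rw [hVval] at hgt
  -- hgt : 2 / ψ (t/2) - (t/2) / (2*R) ≤ V R - t / (2*R)
  have hkey2 : t ≤ 4 * V R * R := by
    have h1 : t / (2 * R) - (t / 2) / (2 * R) ≤ V R - 2 / ψ (t / 2) + (V R - V R) := by
      linarith
    have h2 : t / (4 * R) ≤ V R := by
      have : t / (2 * R) - (t / 2) / (2 * R) = t / (4 * R) := by
        field_simp
        ring
      rw [this] at h1
      linarith
    rw [div_le_iff₀ (by positivity)] at h2
    linarith [mul_comm (V R) (4 * R)]
  calc ψ (4 * V R * R) ≤ ψ t := hψmono t _ ht hkey2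
    _ = 2 / V R := hψt
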